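/- Let R be a commutative ring in which 2 is invertible, containing an element i with i² = −1, and let g₁ be the 3×3 matrix [[1, −i, 0], [−i, 1, 0], [0, 0, 1]] (which is invertible over R since det g₁ = 2). For an upper triangular matrix b ∈ SL₃(R), the conjugate g₁ b g₁⁻¹ belongs to SO(3,R) if and only if b = diag(a, a⁻¹, 1) for some unit a ∈ R^×. -/
import Mathlib


open Matrix

/-- The standard symmetric bilinear form on `R³`: `(v,w) = ∑ i, v i * w i`. -/
def bil {R : Type*} [CommRing R] (v w : Fin 3 → R) : R := ∑ j, v j * w j

/-- The `j`-th column of a 3×3 matrix. -/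
def vcol {R : Type*} (g : Matrix (Fin 3) (Fin 3) R) (j : Fin 3) : Fin 3 → R :=
  fun i => g i j

/-- Membership in `SO(3,R)`: `kᵀk = 1` and `det k = 1`. -/
def SO3 {R : Type*} [CommRing R] (g : Matrix (Fin 3) (Fin 3) R) : Prop :=
  gᵀ * g = 1 ∧ g.det = 1

/-- A 3×3 matrix is upper triangular. -/
def UpperTri {R : Type*} [CommRing R] (b : Matrix (Fin 3) (Fin 3) R) : Prop :=
  ∀ i j : Fin 3, j < i → b i j = 0

/-- `c₁(g) = (v₁(g), v₁(g))`. -/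
def c1 {R : Type*} [CommRing R] (g : Matrix (Fin 3) (Fin 3) R) : R :=
  bil (vcol g 0) (vcol g 0)

/-- `c₂(g) = (v₁(g),v₁(g))(v₂(g),v₂(g)) − (v₁(g),v₂(g))²`. -/
def c2 {R : Type*} [CommRing R] (g : Matrix (Fin 3) (Fin 3) R) : R :=
  bil (vcol g 0) (vcol g 0) * bil (vcol g 1) (vcol g 1) - (bil (vcol g 0) (vcol g 1)) ^ 2

/-- `c₃(g) = (v₁(g), v₂(g))`. -/
def c3 {R : Type*} [CommRing R] (g : Matrix (Fin 3) (Fin 3) R) : R :=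
  bil (vcol g 0) (vcol g 1)

/-!
Statement 9: Let `R` be a commutative ring with `2` invertible containing `i` with
`i² = −1`, and let `g₁ = [[1,−i,0],[−i,1,0],[0,0,1]]`. For an upper triangular
`b ∈ SL₃(R)`, the conjugate `g₁ b g₁⁻¹` belongs to `SO(3,R)` iff
`b = diag(a, a⁻¹, 1)` for some unit `a ∈ Rˣ`.
-/

set_option maxHeartbeats 1000000 in
theorem conj_mem_SO3_iff {R : Type*} [CommRing R] (h2 : IsUnit (2 : R))
    (i : R) (hi : i ^ 2 = -1)
    (b : Matrix (Fin 3) (Fin 3) R) (hb : UpperTri b) (hdet : b.det = 1) :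
    SO3 (!![1, -i, 0; -i, 1, 0; 0, 0, 1] * b * (!![1, -i, 0; -i, 1, 0; 0, 0, 1])⁻¹)
      ↔ ∃ a : Rˣ, b = Matrix.diagonal ![(a : R), ((a⁻¹ : Rˣ) : R), 1] := by
  obtain ⟨c, hc⟩ : ∃ c : R, 2 * c = 1 := by
    obtain ⟨u, hu⟩ := h2
    exact ⟨↑u⁻¹, by rw [← hu]; exact u.mul_inv⟩
  set G : Matrix (Fin 3) (Fin 3) R := !![1, -i, 0; -i, 1, 0; 0, 0, 1] with hG
  set Gi : Matrix (Fin 3) (Fin 3) R := !![c, c*i, 0; c*i, c, 0; 0, 0, 1] with hGi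
  set Q : Matrix (Fin 3) (Fin 3) R := !![0, -(2*i), 0; -(2*i), 0, 0; 0, 0, 1] with hQdef
  have hGGi : G * Gi = 1 := by
    ext a d
    fin_cases a <;> fin_cases d <;>
      simp [hG, hGi, Matrix.mul_apply, Fin.sum_univ_three, Matrix.one_apply] <;>
      first
        | linear_combination (-c) * hi + hc
        | linear_combination c * hi - hc
        | ring
  have hGiG : Gi * G = 1 := by
    ext a d
    fin_cases a <;> fin_cases d <;>
      simp [hG, hGi, Matrix.mul_apply, Fin.sum_univ_three, Matrix.one_apply] <;>
      first
        | linear_combination (-c) * hi + hc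
        | linear_combination c * hi - hc
        | ring
  have hinv : G⁻¹ = Gi := Matrix.inv_eq_right_inv hGGi
  have hGT : Gᵀ = G := by
    ext x y
    fin_cases x <;> fin_cases y <;> simp [hG]
  have hQ : Gᵀ * G = Q := by
    rw [hGT]
    ext a d
    fin_cases a <;> fin_cases d <;>
      simp [hG, hQdef, Matrix.mul_apply, Fin.sum_univ_three, Matrix.vecHead, Matrix.vecTail] <;>
      first
        | linear_combination hi
        | linear_combination -hi
        | ring
  have hGTGiT : Gᵀ * Giᵀ = 1 := by
    rw [← Matrix.transpose_mul, hGiG, Matrix.transpose_one]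
  have hGiTGT : Giᵀ * Gᵀ = 1 := by
    rw [← Matrix.transpose_mul, hGGi, Matrix.transpose_one]
  have key : ∀ X : Matrix (Fin 3) (Fin 3) R, Giᵀ * X * Gi = 1 ↔ X = Q := by
    intro X
    constructor
    · intro h
      have : Gᵀ * (Giᵀ * X * Gi) * G = Gᵀ * 1 * G := by rw [h]
      calc X = (Gᵀ * Giᵀ) * X * (Gi * G) := by rw [hGTGiT, hGiG, Matrix.one_mul, Matrix.mul_one]
        _ = Gᵀ * (Giᵀ * X * Gi) * G := by simp only [Matrix.mul_assoc]
        _ = Gᵀ * 1 * G := this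
        _ = Q := by rw [Matrix.mul_one, hQ]
    · rintro rfl
      rw [← hQ]
      calc Giᵀ * (Gᵀ * G) * Gi = (Giᵀ * Gᵀ) * (G * Gi) := by simp only [Matrix.mul_assoc]
        _ = 1 := by rw [hGiTGT, hGGi, Matrix.one_mul]
  have hassoc : (G * b * Gi)ᵀ * (G * b * Gi) = Giᵀ * (bᵀ * (Gᵀ * G) * b) * Gi := by
    simp only [Matrix.transpose_mul, Matrix.mul_assoc]
  have z10 : b 1 0 = 0 := hb 1 0 (by decide)
  have z20 : b 2 0 = 0 := hb 2 0 (by decide)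
  have z21 : b 2 1 = 0 := hb 2 1 (by decide)
  have hdet' : b 0 0 * b 1 1 * b 2 2 = 1 := by
    rw [Matrix.det_fin_three, z10, z20, z21] at hdet
    linear_combination hdet
  rw [hinv]
  constructor
  · rintro ⟨hK, -⟩
    have hX : bᵀ * Q * b = Q := by
      have h := (key _).1 (hassoc ▸ hK)
      rwa [hQ] at h
    rw [← Matrix.ext_iff] at hX
    have h01 := hX 0 1
    have h02 := hX 0 2
    have h11 := hX 1 1
    have h12 := hX 1 2
    simp [hQdef, Matrix.mul_apply, Matrix.transpose_apply, Fin.sum_univ_three,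
      Matrix.vecHead, Matrix.vecTail, z10, z20, z21] at h01 h02 h11 h12
    have he : (-(c*i)) * (2*i) = 1 := by linear_combination (-2*c)*hi + hc
    -- h01 : -2i * b00 * b11 = -2i  → b00*b11 = 1
    have hps : b 0 0 * b 1 1 = 1 := by
      linear_combination (-(c*i)) * h01 + (1 - b 0 0 * b 1 1) * he
    -- h02 : -2i * b00 * b12 = 0 → b12 = 0
    have hpt : b 0 0 * b 1 2 = 0 := by
      linear_combination (-(c*i)) * h02 - (b 0 0 * b 1 2) * he
    have ht : b 1 2 = 0 := by linear_combination b 1 1 * hpt - b 1 2 * hps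
    -- h11 : -4i qs = 0
    have hqs : b 0 1 * b 1 1 = 0 := by
      linear_combination (c*i*c) * h11 + (-(2*c*(b 0 1 * b 1 1))) * he + (-(b 0 1 * b 1 1)) * hc
    have hq : b 0 1 = 0 := by linear_combination b 0 0 * hqs - b 0 1 * hps
    -- h12 : -2i(qt + sr) = 0, with q known 0
    have hsr : b 1 1 * b 0 2 = 0 := by
      linear_combination (c*i) * h12 + (-(b 1 1 * b 0 2 + b 0 1 * b 1 2)) * he + (-(b 1 2)) * hq
    have hr : b 0 2 = 0 := by linear_combination b 0 0 * hsr - b 0 2 * hps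
    have hu : b 2 2 = 1 := by linear_combination hdet' - b 2 2 * hps
    refine ⟨⟨b 0 0, b 1 1, hps, by rw [mul_comm]; exact hps⟩, ?_⟩
    ext x y
    fin_cases x <;> fin_cases y <;>
      simp [Matrix.diagonal, z10, z20, z21, hq, hr, ht, hu]
  · rintro ⟨a, rfl⟩
    constructor
    · rw [hassoc, hQ]
      refine (key _).2 ?_
      have ha : (a : R) * ((a⁻¹ : Rˣ) : R) = 1 := a.mul_inv
      have ha2 : ((a⁻¹ : Rˣ) : R) * (a : R) = 1 := a.inv_mul
      ext x y
      fin_cases x <;> fin_cases y <;>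
        simp [hQdef, Matrix.mul_apply, Matrix.transpose_apply, Fin.sum_univ_three,
          Matrix.diagonal, Matrix.vecHead, Matrix.vecTail]
      · linear_combination (2*i) * ha
      · linear_combination (2*i) * ha2
    · have hGd : G.det * Gi.det = 1 := by rw [← Matrix.det_mul, hGGi, Matrix.det_one]
      rw [Matrix.det_mul, Matrix.det_mul]
      linear_combination (Matrix.diagonal ![(a : R), ((a⁻¹ : Rˣ) : R), 1]).det * hGd + hdet
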